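/- Let U and B be Hopf algebras over a field k and τ : U ⊗ B → k a linear map satisfying: (1) τ(uv, a) = τ(u, a₁)τ(v, a₂); (2) τ(u, ab) = τ(u₁, b)τ(u₂, a); (3) τ(1, a) = ε_B(a); (4) τ(u, 1) = ε_U(u). Then σ : (U⊗B) ⊗ (U⊗B) → k defined by σ(u⊗a, v⊗b) := ε_U(u) τ(v, a) ε_B(b) is a unital 2-cocycle on the tensor product Hopf algebra U ⊗ B, with convolution inverse σ⁻¹(u⊗a, v⊗b) = ε_U(u) τ(S(v), a) ε_B(b). -/

import Mathlib

/- STATEMENT 11: Let `U` and `B` be Hopf algebras over a field `k` and `τ : U ⊗ B → k` a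
linear map with (1) `τ(uv,a) = τ(u,a₁)τ(v,a₂)`, (2) `τ(u,ab) = τ(u₁,b)τ(u₂,a)`,
(3) `τ(1,a) = ε_B(a)`, (4) `τ(u,1) = ε_U(u)`.  Then
`σ(u⊗a, v⊗b) := ε_U(u) τ(v,a) ε_B(b)` is a unital 2-cocycle on the tensor product
Hopf algebra `U ⊗ B` with convolution inverse `σ⁻¹(u⊗a, v⊗b) = ε_U(u) τ(S(v),a) ε_B(b)`. -/

open TensorProduct

universe u

variable {k : Type u} [Field k]

/-- Convolution product of two functionals on a coalgebra. -/
noncomputable def conv {C : Type u} [AddCommGroup C] [Module k C] [Coalgebra k C]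
    (f g : C →ₗ[k] k) : C →ₗ[k] k :=
  LinearMap.mul' k k ∘ₗ TensorProduct.map f g ∘ₗ Coalgebra.comul

/-- The 2-cocycle condition `σ(x₁,y₁)σ(x₂y₂,z) = σ(y₁,z₁)σ(x,y₂z₂)` on a bialgebra `A`. -/
noncomputable def IsCocycle {A : Type u} [Ring A] [Bialgebra k A]
    (σ : A ⊗[k] A →ₗ[k] k) : Prop :=
  conv (LinearMap.mul' k k ∘ₗ TensorProduct.map σ Coalgebra.counit)
      (σ ∘ₗ TensorProduct.map (LinearMap.mul' k A) LinearMap.id) =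
    conv ((LinearMap.mul' k k ∘ₗ TensorProduct.map Coalgebra.counit σ) ∘ₗ
        (TensorProduct.assoc k A A A).toLinearMap)
      (σ ∘ₗ TensorProduct.map LinearMap.id (LinearMap.mul' k A) ∘ₗ
        (TensorProduct.assoc k A A A).toLinearMap)


set_option synthInstance.maxHeartbeats 1000000
set_option maxHeartbeats 4000000

open Coalgebra

section helpers

variable {k : Type u} [Field k] {M N : Type u} [AddCommGroup M] [Module k M] [Coalgebra k M]
  [AddCommGroup N] [Module k N] [Coalgebra k N]

lemma sum_counit_mul' {c : M} {ι : Type*} (r : Coalgebra.Repr k c ι) (F : M →ₗ[k] k) :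
    ∑ i ∈ r.index, counit (R := k) (r.left i) * F (r.right i) = F c := by
  calc ∑ i ∈ r.index, counit (R := k) (r.left i) * F (r.right i)
      = (TensorProduct.lid k k) (LinearMap.lTensor k F ((1:k) ⊗ₜ[k] c)) := by
        rw [← Coalgebra.sum_counit_tmul_eq (R := k) r]
        simp only [map_sum, LinearMap.lTensor_tmul, TensorProduct.lid_tmul, smul_eq_mul]
    _ = F c := by simp

lemma sum_mul_counit' {c : M} {ι : Type*} (r : Coalgebra.Repr k c ι) (F : M →ₗ[k] k) :
    ∑ i ∈ r.index, F (r.left i) * counit (R := k) (r.right i) = F c := by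
  calc ∑ i ∈ r.index, F (r.left i) * counit (R := k) (r.right i)
      = (TensorProduct.rid k k) (LinearMap.rTensor k F (c ⊗ₜ[k] (1:k))) := by
        rw [← Coalgebra.sum_tmul_counit_eq (R := k) r]
        simp only [map_sum, LinearMap.rTensor_tmul, TensorProduct.rid_tmul, smul_eq_mul]
        exact Finset.sum_congr rfl fun i _ => mul_comm _ _
    _ = F c := by simp

lemma collapseL {c : M} {ι : Type*} (r : Coalgebra.Repr k c ι) (F : M →ₗ[k] k) (K : k) :
    ∑ i ∈ r.index, K * (counit (R := k) (r.left i) * F (r.right i)) = K * F c := by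
  rw [← Finset.mul_sum, sum_counit_mul']

lemma collapseR {c : M} {ι : Type*} (r : Coalgebra.Repr k c ι) (F : M →ₗ[k] k) (K : k) :
    ∑ i ∈ r.index, K * (F (r.left i) * counit (R := k) (r.right i)) = K * F c := by
  rw [← Finset.mul_sum, sum_mul_counit']

lemma sum_cc {c : M} {ι : Type*} (r : Coalgebra.Repr k c ι) (K : k) :
    ∑ i ∈ r.index, K * (counit (R := k) (r.left i) * counit (R := k) (r.right i)) =
      K * counit (R := k) c :=
  collapseL r Coalgebra.counit K

lemma sum_counit_counit {c : M} {ι : Type*} (r : Coalgebra.Repr k c ι) :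
    ∑ i ∈ r.index, counit (R := k) (r.left i) * counit (R := k) (r.right i) =
      counit (R := k) c :=
  sum_counit_mul' r Coalgebra.counit

lemma counit_tmul (m : M) (n : N) :
    Coalgebra.counit (R := k) (m ⊗ₜ[k] n) =
      Coalgebra.counit (R := k) m * Coalgebra.counit (R := k) n := by
  show Coalgebra.counit (R := k) n • Coalgebra.counit (R := k) m = _
  rw [smul_eq_mul, mul_comm]

lemma comul_tmul_repr' (m : M) (n : N) {ι κ : Type*} (rm : Coalgebra.Repr k m ι) (rn : Coalgebra.Repr k n κ) :
    Coalgebra.comul (R := k) (m ⊗ₜ[k] n) =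
      ∑ i ∈ rm.index, ∑ j ∈ rn.index,
        (rm.left i ⊗ₜ[k] rn.left j) ⊗ₜ[k] (rm.right i ⊗ₜ[k] rn.right j) := by
  show TensorProduct.tensorTensorTensorComm k M M N N
    (Coalgebra.comul m ⊗ₜ Coalgebra.comul n) = _
  rw [← rm.eq, ← rn.eq]
  simp only [TensorProduct.sum_tmul, TensorProduct.tmul_sum, map_sum,
    TensorProduct.tensorTensorTensorComm_tmul]
  rw [Finset.sum_comm]

/-- tensor of two representations -/
@[reducible] noncomputable def tmulRepr {m : M} {n : N} {ι κ : Type*} (rm : Coalgebra.Repr k m ι)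
    (rn : Coalgebra.Repr k n κ) : Coalgebra.Repr k (m ⊗ₜ[k] n) (ι × κ) where
  index := rm.index ×ˢ rn.index
  left := fun p => rm.left p.1 ⊗ₜ[k] rn.left p.2
  right := fun p => rm.right p.1 ⊗ₜ[k] rn.right p.2
  eq := by rw [comul_tmul_repr' m n rm rn, Finset.sum_product]

@[simp] lemma tmulRepr_index {m : M} {n : N} {ι κ : Type*} (rm : Coalgebra.Repr k m ι)
    (rn : Coalgebra.Repr k n κ) : (tmulRepr rm rn).index = rm.index ×ˢ rn.index := rfl
@[simp] lemma tmulRepr_left {m : M} {n : N} {ι κ : Type*} (rm : Coalgebra.Repr k m ι)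
    (rn : Coalgebra.Repr k n κ) (p) :
    (tmulRepr rm rn).left p = rm.left p.1 ⊗ₜ[k] rn.left p.2 := rfl
@[simp] lemma tmulRepr_right {m : M} {n : N} {ι κ : Type*} (rm : Coalgebra.Repr k m ι)
    (rn : Coalgebra.Repr k n κ) (p) :
    (tmulRepr rm rn).right p = rm.right p.1 ⊗ₜ[k] rn.right p.2 := rfl

lemma conv_repr (f g : M →ₗ[k] k) {c : M} {ι : Type*} (r : Coalgebra.Repr k c ι) :
    conv f g c = ∑ i ∈ r.index, f (r.left i) * g (r.right i) := by
  rw [conv]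
  simp only [LinearMap.comp_apply]
  rw [← r.eq]
  simp only [map_sum, TensorProduct.map_tmul, LinearMap.mul'_apply]

end helpers

section collapses

variable {k U B : Type u} [Field k] [Ring U] [Ring B] [HopfAlgebra k U] [HopfAlgebra k B]
  (τ : U ⊗[k] B →ₗ[k] k)

/-- collapse `∑ ε(w₁) τ(w₂ ⊗ y)`. -/
lemma coll1 {w : U} {ι : Type*} (r : Coalgebra.Repr k w ι) (y : B) (K : k) :
    ∑ i ∈ r.index, K * (counit (R := k) (r.left i) * τ (r.right i ⊗ₜ[k] y)) =
      K * τ (w ⊗ₜ[k] y) := by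
  have h := collapseL r (τ ∘ₗ (TensorProduct.mk k U B).flip y) K
  simpa only [LinearMap.comp_apply, LinearMap.flip_apply, TensorProduct.mk_apply] using h

/-- collapse `∑ ε(a₁) τ(z ⊗ a₂)`. -/
lemma coll2 {a : B} {ι : Type*} (r : Coalgebra.Repr k a ι) (z : U) (K : k) :
    ∑ i ∈ r.index, K * (counit (R := k) (r.left i) * τ (z ⊗ₜ[k] r.right i)) =
      K * τ (z ⊗ₜ[k] a) := by
  have h := collapseL r (τ ∘ₗ TensorProduct.mk k U B z) K
  simpa only [LinearMap.comp_apply, TensorProduct.mk_apply] using h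

/-- collapse `∑ ε(b₁) τ(z ⊗ (y * b₂))`. -/
lemma coll3 {b : B} {ι : Type*} (r : Coalgebra.Repr k b ι) (z : U) (y : B) (K : k) :
    ∑ i ∈ r.index, K * (counit (R := k) (r.left i) * τ (z ⊗ₜ[k] (y * r.right i))) =
      K * τ (z ⊗ₜ[k] (y * b)) := by
  have h := collapseL r (τ ∘ₗ TensorProduct.mk k U B z ∘ₗ LinearMap.mulLeft k y) K
  simpa only [LinearMap.comp_apply, TensorProduct.mk_apply, LinearMap.mulLeft_apply] using h

/-- collapse `∑ τ(v₁ ⊗ y) ε(v₂)`. -/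
lemma coll4 {v : U} {ι : Type*} (r : Coalgebra.Repr k v ι) (y : B) (K : k) :
    ∑ i ∈ r.index, K * (τ (r.left i ⊗ₜ[k] y) * counit (R := k) (r.right i)) =
      K * τ (v ⊗ₜ[k] y) := by
  have h := collapseR r (τ ∘ₗ (TensorProduct.mk k U B).flip y) K
  simpa only [LinearMap.comp_apply, LinearMap.flip_apply, TensorProduct.mk_apply] using h

/-- collapse `∑ τ(z ⊗ b₁) ε(b₂)`. -/
lemma coll5 {b : B} {ι : Type*} (r : Coalgebra.Repr k b ι) (z : U) (K : k) :
    ∑ i ∈ r.index, K * (τ (z ⊗ₜ[k] r.left i) * counit (R := k) (r.right i)) =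
      K * τ (z ⊗ₜ[k] b) := by
  have h := collapseR r (τ ∘ₗ TensorProduct.mk k U B z) K
  simpa only [LinearMap.comp_apply, TensorProduct.mk_apply] using h

/-- collapse `∑ ε(v₁) τ((v₂ * z) ⊗ y)`. -/
lemma coll6 {v : U} {ι : Type*} (r : Coalgebra.Repr k v ι) (z : U) (y : B) (K : k) :
    ∑ i ∈ r.index, K * (counit (R := k) (r.left i) * τ ((r.right i * z) ⊗ₜ[k] y)) =
      K * τ ((v * z) ⊗ₜ[k] y) := by
  have h := collapseL r (τ ∘ₗ (TensorProduct.mk k U B).flip y ∘ₗ LinearMap.mulRight k z) K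
  simpa only [LinearMap.comp_apply, LinearMap.flip_apply, TensorProduct.mk_apply,
    LinearMap.mulRight_apply] using h

lemma hC' (h1 : τ ∘ₗ TensorProduct.map (LinearMap.mul' k U) LinearMap.id =
      LinearMap.mul' k k ∘ₗ TensorProduct.map τ τ ∘ₗ
        (TensorProduct.tensorTensorTensorComm k U U B B).toLinearMap ∘ₗ
        LinearMap.lTensor (U ⊗[k] U) (Coalgebra.comul (R := k) (A := B)))
    (x y : U) (b : B) {ι : Type*} (r : Coalgebra.Repr k b ι) :
    ∑ i ∈ r.index, τ (x ⊗ₜ[k] r.left i) * τ (y ⊗ₜ[k] r.right i) = τ ((x*y) ⊗ₜ[k] b) := by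
  have h := LinearMap.congr_fun h1 ((x ⊗ₜ[k] y) ⊗ₜ[k] b)
  simp only [LinearMap.comp_apply, LinearEquiv.coe_coe, TensorProduct.map_tmul,
    LinearMap.mul'_apply, LinearMap.id_coe, id_eq, LinearMap.lTensor_tmul] at h
  rw [← r.eq] at h
  simp only [TensorProduct.tmul_sum, map_sum, TensorProduct.tensorTensorTensorComm_tmul,
    TensorProduct.map_tmul, LinearMap.mul'_apply, LinearEquiv.coe_coe] at h
  exact h.symm

lemma hD' (h2 : τ ∘ₗ LinearMap.lTensor U (LinearMap.mul' k B) =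
      LinearMap.mul' k k ∘ₗ TensorProduct.map τ τ ∘ₗ
        (TensorProduct.tensorTensorTensorComm k U U B B).toLinearMap ∘ₗ
        TensorProduct.map (Coalgebra.comul (R := k) (A := U))
          (TensorProduct.comm k B B).toLinearMap)
    (u : U) (a b : B) {ι : Type*} (r : Coalgebra.Repr k u ι) :
    ∑ i ∈ r.index, τ (r.left i ⊗ₜ[k] b) * τ (r.right i ⊗ₜ[k] a) = τ (u ⊗ₜ[k] (a*b)) := by
  have h := LinearMap.congr_fun h2 (u ⊗ₜ[k] (a ⊗ₜ[k] b))
  simp only [LinearMap.comp_apply, LinearEquiv.coe_coe, TensorProduct.map_tmul,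
    LinearMap.mul'_apply, LinearMap.lTensor_tmul, TensorProduct.comm_tmul] at h
  rw [← r.eq] at h
  simp only [TensorProduct.sum_tmul, map_sum, TensorProduct.tensorTensorTensorComm_tmul,
    TensorProduct.map_tmul, LinearMap.mul'_apply, LinearEquiv.coe_coe] at h
  exact h.symm

end collapses

theorem tensor_cocycle_from_pairing {U B : Type u} [Ring U] [Ring B]
    [HopfAlgebra k U] [HopfAlgebra k B]
    (τ : U ⊗[k] B →ₗ[k] k)
    -- (1) `τ(uv, a) = τ(u, a₁) τ(v, a₂)`
    (h1 : τ ∘ₗ TensorProduct.map (LinearMap.mul' k U) LinearMap.id =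
      LinearMap.mul' k k ∘ₗ TensorProduct.map τ τ ∘ₗ
        (TensorProduct.tensorTensorTensorComm k U U B B).toLinearMap ∘ₗ
        LinearMap.lTensor (U ⊗[k] U) (Coalgebra.comul (R := k) (A := B)))
    -- (2) `τ(u, ab) = τ(u₁, b) τ(u₂, a)`
    (h2 : τ ∘ₗ LinearMap.lTensor U (LinearMap.mul' k B) =
      LinearMap.mul' k k ∘ₗ TensorProduct.map τ τ ∘ₗ
        (TensorProduct.tensorTensorTensorComm k U U B B).toLinearMap ∘ₗ
        TensorProduct.map (Coalgebra.comul (R := k) (A := U))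
          (TensorProduct.comm k B B).toLinearMap)
    -- (3) `τ(1, a) = ε_B(a)` and (4) `τ(u, 1) = ε_U(u)`
    (h3 : ∀ a : B, τ ((1 : U) ⊗ₜ[k] a) = Coalgebra.counit (R := k) a)
    (h4 : ∀ u : U, τ (u ⊗ₜ[k] (1 : B)) = Coalgebra.counit (R := k) u)
    -- `σ` and `σ'` defined by the stated formulas
    (σ σ' : (U ⊗[k] B) ⊗[k] (U ⊗[k] B) →ₗ[k] k)
    (hσ : ∀ (u v : U) (a b : B), σ ((u ⊗ₜ[k] a) ⊗ₜ[k] (v ⊗ₜ[k] b)) =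
      Coalgebra.counit (R := k) u * τ (v ⊗ₜ[k] a) * Coalgebra.counit (R := k) b)
    (hσ' : ∀ (u v : U) (a b : B), σ' ((u ⊗ₜ[k] a) ⊗ₜ[k] (v ⊗ₜ[k] b)) =
      Coalgebra.counit (R := k) u * τ (HopfAlgebra.antipode (R := k) v ⊗ₜ[k] a) *
        Coalgebra.counit (R := k) b) :
    IsCocycle σ ∧ σ ((1 : U ⊗[k] B) ⊗ₜ[k] (1 : U ⊗[k] B)) = 1 ∧
    conv σ σ' = Coalgebra.counit ∧ conv σ' σ = Coalgebra.counit := by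
  refine ⟨?_, ?_, ?_, ?_⟩
  · unfold IsCocycle
    ext u a v b w c
    simp only [TensorProduct.AlgebraTensorModule.curry_apply, TensorProduct.curry_apply,
      LinearMap.coe_restrictScalars]
    rw [conv_repr _ _ (tmulRepr (tmulRepr (tmulRepr (ℛ k u) (ℛ k a)) (tmulRepr (ℛ k v) (ℛ k b)))
      (tmulRepr (ℛ k w) (ℛ k c)))]
    rw [conv_repr _ _ (tmulRepr (tmulRepr (tmulRepr (ℛ k u) (ℛ k a)) (tmulRepr (ℛ k v) (ℛ k b)))
      (tmulRepr (ℛ k w) (ℛ k c)))]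
    simp only [tmulRepr_index, tmulRepr_left, tmulRepr_right, Finset.sum_product,
      LinearMap.comp_apply, TensorProduct.map_tmul, LinearMap.mul'_apply, LinearMap.id_coe, id_eq,
      LinearEquiv.coe_coe, TensorProduct.assoc_tmul, Algebra.TensorProduct.tmul_mul_tmul, hσ,
      _root_.counit_tmul, Bialgebra.counit_mul]
    trans Coalgebra.counit (R := k) u * ∑ x1 ∈ (ℛ k a).index, Coalgebra.counit (R := k) c *
        (τ (v ⊗ₜ[k] (ℛ k a).left x1) * τ (w ⊗ₜ[k] ((ℛ k a).right x1 * b)))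
    · -- RAW_L = FINAL_L
      trans ∑ x ∈ (ℛ k u).index, ∑ x1 ∈ (ℛ k a).index, ∑ x2 ∈ (ℛ k v).index,
          ∑ x3 ∈ (ℛ k b).index, ∑ x4 ∈ (ℛ k w).index,
          (Coalgebra.counit (R := k) ((ℛ k u).left x) * τ ((ℛ k v).left x2 ⊗ₜ[k] (ℛ k a).left x1) *
            Coalgebra.counit (R := k) ((ℛ k b).left x3) *
            Coalgebra.counit (R := k) ((ℛ k w).left x4) *
            (Coalgebra.counit (R := k) ((ℛ k u).right x) *
              Coalgebra.counit (R := k) ((ℛ k v).right x2) *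
              τ ((ℛ k w).right x4 ⊗ₜ[k] ((ℛ k a).right x1 * (ℛ k b).right x3)))) *
            Coalgebra.counit (R := k) c
      · refine Finset.sum_congr rfl fun x _ => Finset.sum_congr rfl fun x1 _ =>
          Finset.sum_congr rfl fun x2 _ => Finset.sum_congr rfl fun x3 _ =>
          Finset.sum_congr rfl fun x4 _ => ?_
        rw [← sum_cc (ℛ k c)]
        exact Finset.sum_congr rfl fun x5 _ => by ring
      trans ∑ x ∈ (ℛ k u).index, ∑ x1 ∈ (ℛ k a).index, ∑ x2 ∈ (ℛ k v).index,
          ∑ x3 ∈ (ℛ k b).index,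
          (Coalgebra.counit (R := k) ((ℛ k u).left x) * τ ((ℛ k v).left x2 ⊗ₜ[k] (ℛ k a).left x1) *
            Coalgebra.counit (R := k) ((ℛ k b).left x3) *
            (Coalgebra.counit (R := k) ((ℛ k u).right x) *
              Coalgebra.counit (R := k) ((ℛ k v).right x2)) *
            Coalgebra.counit (R := k) c) *
            τ (w ⊗ₜ[k] ((ℛ k a).right x1 * (ℛ k b).right x3))
      · refine Finset.sum_congr rfl fun x _ => Finset.sum_congr rfl fun x1 _ =>
          Finset.sum_congr rfl fun x2 _ => Finset.sum_congr rfl fun x3 _ => ?_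
        rw [← coll1 τ (ℛ k w) ((ℛ k a).right x1 * (ℛ k b).right x3)]
        exact Finset.sum_congr rfl fun x4 _ => by ring
      trans ∑ x ∈ (ℛ k u).index, ∑ x1 ∈ (ℛ k a).index, ∑ x2 ∈ (ℛ k v).index,
          (Coalgebra.counit (R := k) ((ℛ k u).left x) * τ ((ℛ k v).left x2 ⊗ₜ[k] (ℛ k a).left x1) *
            (Coalgebra.counit (R := k) ((ℛ k u).right x) *
              Coalgebra.counit (R := k) ((ℛ k v).right x2)) *
            Coalgebra.counit (R := k) c) *
            τ (w ⊗ₜ[k] ((ℛ k a).right x1 * b))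
      · refine Finset.sum_congr rfl fun x _ => Finset.sum_congr rfl fun x1 _ =>
          Finset.sum_congr rfl fun x2 _ => ?_
        rw [← coll3 τ (ℛ k b) w ((ℛ k a).right x1)]
        exact Finset.sum_congr rfl fun x3 _ => by ring
      trans ∑ x ∈ (ℛ k u).index, ∑ x1 ∈ (ℛ k a).index,
          (Coalgebra.counit (R := k) ((ℛ k u).left x) *
            Coalgebra.counit (R := k) ((ℛ k u).right x) *
            (Coalgebra.counit (R := k) c * τ (w ⊗ₜ[k] ((ℛ k a).right x1 * b)))) *
            τ (v ⊗ₜ[k] (ℛ k a).left x1)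
      · refine Finset.sum_congr rfl fun x _ => Finset.sum_congr rfl fun x1 _ => ?_
        rw [← coll4 τ (ℛ k v) ((ℛ k a).left x1)]
        exact Finset.sum_congr rfl fun x2 _ => by ring
      calc ∑ x ∈ (ℛ k u).index, ∑ x1 ∈ (ℛ k a).index,
            (Coalgebra.counit (R := k) ((ℛ k u).left x) *
              Coalgebra.counit (R := k) ((ℛ k u).right x) *
              (Coalgebra.counit (R := k) c * τ (w ⊗ₜ[k] ((ℛ k a).right x1 * b)))) *
              τ (v ⊗ₜ[k] (ℛ k a).left x1)
          = ∑ x ∈ (ℛ k u).index,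
              (Coalgebra.counit (R := k) ((ℛ k u).left x) *
                Coalgebra.counit (R := k) ((ℛ k u).right x)) *
              ∑ x1 ∈ (ℛ k a).index, Coalgebra.counit (R := k) c *
                (τ (v ⊗ₜ[k] (ℛ k a).left x1) * τ (w ⊗ₜ[k] ((ℛ k a).right x1 * b))) := by
            refine Finset.sum_congr rfl fun x _ => ?_
            rw [Finset.mul_sum]
            exact Finset.sum_congr rfl fun x1 _ => by ring
        _ = (∑ x ∈ (ℛ k u).index, Coalgebra.counit (R := k) ((ℛ k u).left x) *
              Coalgebra.counit (R := k) ((ℛ k u).right x)) *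
              ∑ x1 ∈ (ℛ k a).index, Coalgebra.counit (R := k) c *
                (τ (v ⊗ₜ[k] (ℛ k a).left x1) * τ (w ⊗ₜ[k] ((ℛ k a).right x1 * b))) := by
            rw [Finset.sum_mul]
        _ = _ := by rw [sum_counit_counit (ℛ k u)]
    · -- FINAL_L = RAW_R ; go through FINAL_R
      trans Coalgebra.counit (R := k) u * ∑ x4 ∈ (ℛ k w).index, Coalgebra.counit (R := k) c *
          (τ ((ℛ k w).left x4 ⊗ₜ[k] b) * τ ((v * (ℛ k w).right x4) ⊗ₜ[k] a))
      · -- FINAL_L = FINAL_R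
        have eL : ∀ x1 ∈ (ℛ k a).index, Coalgebra.counit (R := k) c *
            (τ (v ⊗ₜ[k] (ℛ k a).left x1) * τ (w ⊗ₜ[k] ((ℛ k a).right x1 * b))) =
            ∑ x4 ∈ (ℛ k w).index, Coalgebra.counit (R := k) c *
              (τ (v ⊗ₜ[k] (ℛ k a).left x1) *
                (τ ((ℛ k w).left x4 ⊗ₜ[k] b) * τ ((ℛ k w).right x4 ⊗ₜ[k] (ℛ k a).right x1))) := by
          intro x1 _
          rw [← hD' τ h2 w ((ℛ k a).right x1) b (ℛ k w), Finset.mul_sum, Finset.mul_sum]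
        have eR : ∀ x4 ∈ (ℛ k w).index, Coalgebra.counit (R := k) c *
            (τ ((ℛ k w).left x4 ⊗ₜ[k] b) * τ ((v * (ℛ k w).right x4) ⊗ₜ[k] a)) =
            ∑ x1 ∈ (ℛ k a).index, Coalgebra.counit (R := k) c *
              (τ (v ⊗ₜ[k] (ℛ k a).left x1) *
                (τ ((ℛ k w).left x4 ⊗ₜ[k] b) * τ ((ℛ k w).right x4 ⊗ₜ[k] (ℛ k a).right x1))) := by
          intro x4 _
          rw [← hC' τ h1 v ((ℛ k w).right x4) a (ℛ k a), Finset.mul_sum, Finset.mul_sum]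
          exact Finset.sum_congr rfl fun x1 _ => by ring
        rw [Finset.sum_congr rfl eL, Finset.sum_congr rfl eR, Finset.sum_comm]
      · -- FINAL_R = RAW_R  (reverse of the collapse chain for RAW_R)
        symm
        trans ∑ x ∈ (ℛ k u).index, ∑ x1 ∈ (ℛ k a).index, ∑ x2 ∈ (ℛ k v).index,
            ∑ x3 ∈ (ℛ k b).index, ∑ x4 ∈ (ℛ k w).index,
            (Coalgebra.counit (R := k) ((ℛ k u).left x) *
              Coalgebra.counit (R := k) ((ℛ k a).left x1) *
              (Coalgebra.counit (R := k) ((ℛ k v).left x2) *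
                τ ((ℛ k w).left x4 ⊗ₜ[k] (ℛ k b).left x3)) *
              (Coalgebra.counit (R := k) ((ℛ k u).right x) *
                τ (((ℛ k v).right x2 * (ℛ k w).right x4) ⊗ₜ[k] (ℛ k a).right x1) *
                Coalgebra.counit (R := k) ((ℛ k b).right x3))) *
              Coalgebra.counit (R := k) c
        · refine Finset.sum_congr rfl fun x _ => Finset.sum_congr rfl fun x1 _ =>
            Finset.sum_congr rfl fun x2 _ => Finset.sum_congr rfl fun x3 _ =>
            Finset.sum_congr rfl fun x4 _ => ?_
          rw [← sum_cc (ℛ k c)]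
          exact Finset.sum_congr rfl fun x5 _ => by ring
        trans ∑ x ∈ (ℛ k u).index, ∑ x1 ∈ (ℛ k a).index, ∑ x2 ∈ (ℛ k v).index,
            ∑ x4 ∈ (ℛ k w).index, ∑ x3 ∈ (ℛ k b).index,
            (Coalgebra.counit (R := k) ((ℛ k u).left x) *
              Coalgebra.counit (R := k) ((ℛ k a).left x1) *
              (Coalgebra.counit (R := k) ((ℛ k v).left x2) *
                τ ((ℛ k w).left x4 ⊗ₜ[k] (ℛ k b).left x3)) *
              (Coalgebra.counit (R := k) ((ℛ k u).right x) *
                τ (((ℛ k v).right x2 * (ℛ k w).right x4) ⊗ₜ[k] (ℛ k a).right x1) *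
                Coalgebra.counit (R := k) ((ℛ k b).right x3))) *
              Coalgebra.counit (R := k) c
        · refine Finset.sum_congr rfl fun x _ => Finset.sum_congr rfl fun x1 _ =>
            Finset.sum_congr rfl fun x2 _ => ?_
          exact Finset.sum_comm
        trans ∑ x ∈ (ℛ k u).index, ∑ x1 ∈ (ℛ k a).index, ∑ x2 ∈ (ℛ k v).index,
            ∑ x4 ∈ (ℛ k w).index,
            (Coalgebra.counit (R := k) ((ℛ k u).left x) *
              Coalgebra.counit (R := k) ((ℛ k a).left x1) *
              Coalgebra.counit (R := k) ((ℛ k v).left x2) *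
              (Coalgebra.counit (R := k) ((ℛ k u).right x) *
                τ (((ℛ k v).right x2 * (ℛ k w).right x4) ⊗ₜ[k] (ℛ k a).right x1)) *
              Coalgebra.counit (R := k) c) *
              τ ((ℛ k w).left x4 ⊗ₜ[k] b)
        · refine Finset.sum_congr rfl fun x _ => Finset.sum_congr rfl fun x1 _ =>
            Finset.sum_congr rfl fun x2 _ => Finset.sum_congr rfl fun x4 _ => ?_
          rw [← coll5 τ (ℛ k b) ((ℛ k w).left x4)]
          exact Finset.sum_congr rfl fun x3 _ => by ring
        trans ∑ x ∈ (ℛ k u).index, ∑ x1 ∈ (ℛ k a).index, ∑ x4 ∈ (ℛ k w).index,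
            ∑ x2 ∈ (ℛ k v).index,
            (Coalgebra.counit (R := k) ((ℛ k u).left x) *
              Coalgebra.counit (R := k) ((ℛ k a).left x1) *
              Coalgebra.counit (R := k) ((ℛ k v).left x2) *
              (Coalgebra.counit (R := k) ((ℛ k u).right x) *
                τ (((ℛ k v).right x2 * (ℛ k w).right x4) ⊗ₜ[k] (ℛ k a).right x1)) *
              Coalgebra.counit (R := k) c) *
              τ ((ℛ k w).left x4 ⊗ₜ[k] b)
        · refine Finset.sum_congr rfl fun x _ => Finset.sum_congr rfl fun x1 _ => ?_
          exact Finset.sum_comm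
        trans ∑ x ∈ (ℛ k u).index, ∑ x1 ∈ (ℛ k a).index, ∑ x4 ∈ (ℛ k w).index,
            (Coalgebra.counit (R := k) ((ℛ k u).left x) *
              Coalgebra.counit (R := k) ((ℛ k a).left x1) *
              Coalgebra.counit (R := k) ((ℛ k u).right x) *
              Coalgebra.counit (R := k) c * τ ((ℛ k w).left x4 ⊗ₜ[k] b)) *
              τ ((v * (ℛ k w).right x4) ⊗ₜ[k] (ℛ k a).right x1)
        · refine Finset.sum_congr rfl fun x _ => Finset.sum_congr rfl fun x1 _ =>
            Finset.sum_congr rfl fun x4 _ => ?_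
          rw [← coll6 τ (ℛ k v) ((ℛ k w).right x4) ((ℛ k a).right x1)]
          exact Finset.sum_congr rfl fun x2 _ => by ring
        trans ∑ x ∈ (ℛ k u).index, ∑ x4 ∈ (ℛ k w).index, ∑ x1 ∈ (ℛ k a).index,
            (Coalgebra.counit (R := k) ((ℛ k u).left x) *
              Coalgebra.counit (R := k) ((ℛ k a).left x1) *
              Coalgebra.counit (R := k) ((ℛ k u).right x) *
              Coalgebra.counit (R := k) c * τ ((ℛ k w).left x4 ⊗ₜ[k] b)) *
              τ ((v * (ℛ k w).right x4) ⊗ₜ[k] (ℛ k a).right x1)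
        · refine Finset.sum_congr rfl fun x _ => ?_
          exact Finset.sum_comm
        trans ∑ x ∈ (ℛ k u).index, ∑ x4 ∈ (ℛ k w).index,
            (Coalgebra.counit (R := k) ((ℛ k u).left x) *
              Coalgebra.counit (R := k) ((ℛ k u).right x) *
              (Coalgebra.counit (R := k) c * τ ((ℛ k w).left x4 ⊗ₜ[k] b))) *
              τ ((v * (ℛ k w).right x4) ⊗ₜ[k] a)
        · refine Finset.sum_congr rfl fun x _ => Finset.sum_congr rfl fun x4 _ => ?_
          rw [← coll2 τ (ℛ k a) (v * (ℛ k w).right x4)]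
          exact Finset.sum_congr rfl fun x1 _ => by ring
        calc ∑ x ∈ (ℛ k u).index, ∑ x4 ∈ (ℛ k w).index,
              (Coalgebra.counit (R := k) ((ℛ k u).left x) *
                Coalgebra.counit (R := k) ((ℛ k u).right x) *
                (Coalgebra.counit (R := k) c * τ ((ℛ k w).left x4 ⊗ₜ[k] b))) *
                τ ((v * (ℛ k w).right x4) ⊗ₜ[k] a)
            = ∑ x ∈ (ℛ k u).index,
                (Coalgebra.counit (R := k) ((ℛ k u).left x) *
                  Coalgebra.counit (R := k) ((ℛ k u).right x)) *
                ∑ x4 ∈ (ℛ k w).index, Coalgebra.counit (R := k) c *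
                  (τ ((ℛ k w).left x4 ⊗ₜ[k] b) * τ ((v * (ℛ k w).right x4) ⊗ₜ[k] a)) := by
              refine Finset.sum_congr rfl fun x _ => ?_
              rw [Finset.mul_sum]
              exact Finset.sum_congr rfl fun x4 _ => by ring
          _ = (∑ x ∈ (ℛ k u).index, Coalgebra.counit (R := k) ((ℛ k u).left x) *
                Coalgebra.counit (R := k) ((ℛ k u).right x)) *
                ∑ x4 ∈ (ℛ k w).index, Coalgebra.counit (R := k) c *
                  (τ ((ℛ k w).left x4 ⊗ₜ[k] b) * τ ((v * (ℛ k w).right x4) ⊗ₜ[k] a)) := by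
              rw [Finset.sum_mul]
          _ = _ := by rw [sum_counit_counit (ℛ k u)]
  · rw [Algebra.TensorProduct.one_def, hσ, h3]
    simp
  · ext u a v b
    simp only [TensorProduct.AlgebraTensorModule.curry_apply, TensorProduct.curry_apply,
      LinearMap.coe_restrictScalars]
    rw [conv_repr _ _ (tmulRepr (tmulRepr (ℛ k u) (ℛ k a)) (tmulRepr (ℛ k v) (ℛ k b)))]
    simp only [tmulRepr_index, tmulRepr_left, tmulRepr_right, Finset.sum_product, hσ, hσ',
      _root_.counit_tmul]
    trans ∑ x ∈ (ℛ k u).index, ∑ x1 ∈ (ℛ k a).index, ∑ x2 ∈ (ℛ k v).index,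
        (Coalgebra.counit (R := k) ((ℛ k u).left x) *
          τ ((ℛ k v).left x2 ⊗ₜ[k] (ℛ k a).left x1) *
          (Coalgebra.counit (R := k) ((ℛ k u).right x) *
            τ (HopfAlgebra.antipode (R := k) ((ℛ k v).right x2) ⊗ₜ[k] (ℛ k a).right x1))) *
          Coalgebra.counit (R := k) b
    · refine Finset.sum_congr rfl fun x _ => Finset.sum_congr rfl fun x1 _ =>
        Finset.sum_congr rfl fun x2 _ => ?_
      rw [← sum_cc (ℛ k b)]
      exact Finset.sum_congr rfl fun x3 _ => by ring
    trans (Coalgebra.counit (R := k) u) *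
        ∑ x1 ∈ (ℛ k a).index, ∑ x2 ∈ (ℛ k v).index,
          Coalgebra.counit (R := k) b *
            (τ ((ℛ k v).left x2 ⊗ₜ[k] (ℛ k a).left x1) *
              τ (HopfAlgebra.antipode (R := k) ((ℛ k v).right x2) ⊗ₜ[k] (ℛ k a).right x1))
    · calc _ = ∑ x ∈ (ℛ k u).index,
              (Coalgebra.counit (R := k) ((ℛ k u).left x) *
                Coalgebra.counit (R := k) ((ℛ k u).right x)) *
              ∑ x1 ∈ (ℛ k a).index, ∑ x2 ∈ (ℛ k v).index,
                Coalgebra.counit (R := k) b *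
                  (τ ((ℛ k v).left x2 ⊗ₜ[k] (ℛ k a).left x1) *
                    τ (HopfAlgebra.antipode (R := k) ((ℛ k v).right x2) ⊗ₜ[k]
                      (ℛ k a).right x1)) := by
            refine Finset.sum_congr rfl fun x _ => ?_
            rw [Finset.mul_sum]
            refine Finset.sum_congr rfl fun x1 _ => ?_
            rw [Finset.mul_sum]
            exact Finset.sum_congr rfl fun x2 _ => by ring
        _ = _ := by rw [← Finset.sum_mul, sum_counit_counit (ℛ k u)]
    rw [Finset.sum_comm]
    have e1 : ∀ x2 ∈ (ℛ k v).index, ∑ x1 ∈ (ℛ k a).index, Coalgebra.counit (R := k) b *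
        (τ ((ℛ k v).left x2 ⊗ₜ[k] (ℛ k a).left x1) *
          τ (HopfAlgebra.antipode (R := k) ((ℛ k v).right x2) ⊗ₜ[k] (ℛ k a).right x1)) =
        Coalgebra.counit (R := k) b *
          τ (((ℛ k v).left x2 * HopfAlgebra.antipode (R := k) ((ℛ k v).right x2)) ⊗ₜ[k] a) := by
      intro x2 _
      rw [← hC' τ h1 ((ℛ k v).left x2) (HopfAlgebra.antipode (R := k) ((ℛ k v).right x2))
        a (ℛ k a), Finset.mul_sum]
    rw [Finset.sum_congr rfl e1, ← Finset.mul_sum, ← map_sum, ← TensorProduct.sum_tmul,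
      HopfAlgebra.sum_mul_antipode_eq_algebraMap_counit (ℛ k v), Algebra.algebraMap_eq_smul_one,
      ← TensorProduct.smul_tmul', map_smul, h3, smul_eq_mul]
    ring
  · ext u a v b
    simp only [TensorProduct.AlgebraTensorModule.curry_apply, TensorProduct.curry_apply,
      LinearMap.coe_restrictScalars]
    rw [conv_repr _ _ (tmulRepr (tmulRepr (ℛ k u) (ℛ k a)) (tmulRepr (ℛ k v) (ℛ k b)))]
    simp only [tmulRepr_index, tmulRepr_left, tmulRepr_right, Finset.sum_product, hσ, hσ',
      _root_.counit_tmul]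
    trans ∑ x ∈ (ℛ k u).index, ∑ x1 ∈ (ℛ k a).index, ∑ x2 ∈ (ℛ k v).index,
        (Coalgebra.counit (R := k) ((ℛ k u).left x) *
          τ (HopfAlgebra.antipode (R := k) ((ℛ k v).left x2) ⊗ₜ[k] (ℛ k a).left x1) *
          (Coalgebra.counit (R := k) ((ℛ k u).right x) *
            τ ((ℛ k v).right x2 ⊗ₜ[k] (ℛ k a).right x1))) *
          Coalgebra.counit (R := k) b
    · refine Finset.sum_congr rfl fun x _ => Finset.sum_congr rfl fun x1 _ =>
        Finset.sum_congr rfl fun x2 _ => ?_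
      rw [← sum_cc (ℛ k b)]
      exact Finset.sum_congr rfl fun x3 _ => by ring
    trans (Coalgebra.counit (R := k) u) *
        ∑ x1 ∈ (ℛ k a).index, ∑ x2 ∈ (ℛ k v).index,
          Coalgebra.counit (R := k) b *
            (τ (HopfAlgebra.antipode (R := k) ((ℛ k v).left x2) ⊗ₜ[k] (ℛ k a).left x1) *
              τ ((ℛ k v).right x2 ⊗ₜ[k] (ℛ k a).right x1))
    · calc _ = ∑ x ∈ (ℛ k u).index,
              (Coalgebra.counit (R := k) ((ℛ k u).left x) *
                Coalgebra.counit (R := k) ((ℛ k u).right x)) *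
              ∑ x1 ∈ (ℛ k a).index, ∑ x2 ∈ (ℛ k v).index,
                Coalgebra.counit (R := k) b *
                  (τ (HopfAlgebra.antipode (R := k) ((ℛ k v).left x2) ⊗ₜ[k] (ℛ k a).left x1) *
                    τ ((ℛ k v).right x2 ⊗ₜ[k] (ℛ k a).right x1)) := by
            refine Finset.sum_congr rfl fun x _ => ?_
            rw [Finset.mul_sum]
            refine Finset.sum_congr rfl fun x1 _ => ?_
            rw [Finset.mul_sum]
            exact Finset.sum_congr rfl fun x2 _ => by ring
        _ = _ := by rw [← Finset.sum_mul, sum_counit_counit (ℛ k u)]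
    rw [Finset.sum_comm]
    have e1 : ∀ x2 ∈ (ℛ k v).index, ∑ x1 ∈ (ℛ k a).index, Coalgebra.counit (R := k) b *
        (τ (HopfAlgebra.antipode (R := k) ((ℛ k v).left x2) ⊗ₜ[k] (ℛ k a).left x1) *
          τ ((ℛ k v).right x2 ⊗ₜ[k] (ℛ k a).right x1)) =
        Coalgebra.counit (R := k) b *
          τ ((HopfAlgebra.antipode (R := k) ((ℛ k v).left x2) * (ℛ k v).right x2) ⊗ₜ[k] a) := by
      intro x2 _
      rw [← hC' τ h1 (HopfAlgebra.antipode (R := k) ((ℛ k v).left x2)) ((ℛ k v).right x2)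
        a (ℛ k a), Finset.mul_sum]
    rw [Finset.sum_congr rfl e1, ← Finset.mul_sum, ← map_sum, ← TensorProduct.sum_tmul,
      HopfAlgebra.sum_antipode_mul_eq_algebraMap_counit (ℛ k v), Algebra.algebraMap_eq_smul_one,
      ← TensorProduct.smul_tmul', map_smul, h3, smul_eq_mul]
    ring
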